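/- Let (R, m) be a local ring and 0 → X^0 → X^1 → ... → X^n a complex of finitely generated R-modules with homology H^i, such that H^k = 0 for all k < j. Then there is an exact sequence 0 → X^0 → X^1 → ... → X^j → Cok(f^{j-1}) → 0, and consequently if depth_R X^i ≥ d - i for all i ≤ j (where d = dim R and j < d), then depth_R Cok(f^{j-1}) ≥ d - j > 0. -/

import Mathlib

open CategoryTheory IsLocalRing
open scoped Classical

universe u

noncomputable section

/-- The depth of a module over a Noetherian local ring: the supremum of lengths of
regular sequences contained in the maximal ideal (with `depth 0 = ⊤`). -/
def rdepth (R : Type u) [CommRing R] [IsLocalRing R]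
    (M : Type u) [AddCommGroup M] [Module R M] : ℕ∞ :=
  if Subsingleton M then ⊤
  else sSup {n : ℕ∞ | ∃ rs : List R, (∀ r ∈ rs, r ∈ IsLocalRing.maximalIdeal R) ∧
    RingTheory.Sequence.IsRegular M rs ∧ (rs.length : ℕ∞) = n}

/-- Vanishing of `Ext^i` over an arbitrary ring. -/
def extVanish (A : Type u) [Ring A] (i : ℕ) (X Y : ModuleCat.{u} A) : Prop :=
  Subsingleton (((Ext ℤ (ModuleCat.{u} A) i).obj (Opposite.op X)).obj Y)

/-- Projective dimension, via vanishing of Ext. -/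
def projDim (A : Type u) [Ring A] (X : Type u) [AddCommGroup X] [Module A X] : ℕ∞ :=
  sInf {n : ℕ∞ | ∀ i : ℕ, n < (i : ℕ∞) → ∀ Y : ModuleCat.{u} A,
    extVanish A i (ModuleCat.of A X) Y}

/-- Global dimension of a ring, via vanishing of Ext. -/
def globalDim (A : Type u) [Ring A] : ℕ∞ :=
  sInf {n : ℕ∞ | ∀ i : ℕ, n < (i : ℕ∞) → ∀ X Y : ModuleCat.{u} A, extVanish A i X Y}

/-- A Noetherian local ring is Cohen-Macaulay if its depth equals its Krull dimension. -/
def IsCMLocalRing (R : Type u) [CommRing R] [IsLocalRing R] : Prop :=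
  (rdepth R R : WithBot ℕ∞) = ringKrullDim R

/-- A ring is Cohen-Macaulay if all its localizations at primes are Cohen-Macaulay. -/
def IsCMRing (R : Type u) [CommRing R] : Prop :=
  ∀ (p : Ideal R) (hp : p.IsPrime),
    letI := hp
    IsCMLocalRing (Localization.AtPrime p)

/-- A canonical module of a local ring: a maximal Cohen-Macaulay module of finite injective
dimension whose endomorphism ring is `R`. -/
structure IsCanonicalModule (R : Type u) [CommRing R] [IsLocalRing R]
    (w : Type u) [AddCommGroup w] [Module R w] : Prop where
  finite : Module.Finite R w
  mcm : (rdepth R w : WithBot ℕ∞) = ringKrullDim R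
  finInjDim : ∃ n : ℕ, ∀ i : ℕ, n < i → ∀ X : ModuleCat.{u} R,
    extVanish R i X (ModuleCat.of R w)
  endIso : Nonempty (Module.End R w ≃+* R)

/-- A canonical module of a (not necessarily local) ring: a finitely generated module
which localizes to a canonical module at every maximal ideal. -/
def IsGlobalCanonicalModule (R : Type u) [CommRing R]
    (w : Type u) [AddCommGroup w] [Module R w] : Prop :=
  Module.Finite R w ∧
  ∀ (m : Ideal R) (hm : m.IsMaximal),
    letI := hm.isPrime
    IsCanonicalModule (Localization.AtPrime m) (LocalizedModule m.primeCompl w)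

/-- The height of a prime ideal. -/
def primeHeight {R : Type u} [CommRing R] (p : Ideal R) (hp : p.IsPrime) : ℕ∞ :=
  Order.height (⟨p, hp⟩ : PrimeSpectrum R)

/-- All maximal ideals have the same height. -/
def EquiCodimensional (R : Type u) [CommRing R] : Prop :=
  ∀ (m₁ m₂ : Ideal R) (h₁ : m₁.IsMaximal) (h₂ : m₂.IsMaximal),
    primeHeight m₁ h₁.isPrime = primeHeight m₂ h₂.isPrime

/-- A non-singular `R`-order: a module-finite `R`-algebra which is a maximal Cohen-Macaulay
`R`-module and such that `gl.dim Λ_p = dim R_p` for all primes `p` of `R`. -/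
structure IsNonsingularOrder (R : Type u) [CommRing R]
    (L : Type u) [Ring L] [Algebra R L] : Prop where
  finite : Module.Finite R L
  mcm : ∀ (p : Ideal R) (hp : p.IsPrime),
    letI := hp
    (rdepth (Localization.AtPrime p) (LocalizedModule p.primeCompl L) : WithBot ℕ∞)
      = ringKrullDim (Localization.AtPrime p)
  gldim : ∀ (p : Ideal R) (hp : p.IsPrime),
    letI := hp
    (globalDim (LocalizedModule p.primeCompl L) : WithBot ℕ∞)
      = ringKrullDim (Localization.AtPrime p)

/-- `Hom_R(M,N)` is a left module over `End_R(M)^op` via precomposition.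
(The paper's convention `fg = f then g` makes its `End_R(M)` the opposite of Mathlib's.) -/
instance endOpModuleHom {R M N : Type u} [CommRing R] [AddCommGroup M] [Module R M]
    [AddCommGroup N] [Module R N] :
    Module (Module.End R M)ᵐᵒᵖ (M →ₗ[R] N) where
  smul a g := g ∘ₗ a.unop
  one_smul g := LinearMap.ext fun _ => rfl
  mul_smul a b g := LinearMap.ext fun _ => rfl
  smul_zero a := LinearMap.ext fun _ => rfl
  smul_add a g h := LinearMap.ext fun _ => rfl
  add_smul a b g := LinearMap.ext fun x => g.map_add _ _
  zero_smul g := LinearMap.ext fun x => g.map_zero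

/-- A noncommutative crepant resolution: `End_R(M)` for a nonzero finitely generated
reflexive `R`-module `M` such that `End_R(M)` is a non-singular `R`-order. -/
def IsNCCR (R : Type u) [CommRing R] (M : Type u) [AddCommGroup M] [Module R M] : Prop :=
  Nontrivial M ∧ Module.Finite R M ∧ Module.IsReflexive R M ∧
    IsNonsingularOrder R (Module.End R M)ᵐᵒᵖ

/-- `X ∈ add M`: `X` is a direct summand of a finite direct sum of copies of `M`. -/
def InAdd (A : Type u) [Ring A] (M : Type u) [AddCommGroup M] [Module A M]
    (X : Type u) [AddCommGroup X] [Module A X] : Prop :=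
  ∃ (n : ℕ) (s : X →ₗ[A] (Fin n → M)) (r : (Fin n → M) →ₗ[A] X),
    r ∘ₗ s = LinearMap.id

end


/- ### Auxiliary results for Statement 16: associated primes, prime avoidance,
and the depth lemma. -/

section StmtAux

open RingTheory.Sequence Submodule
open scoped Pointwise
set_option linter.unusedSectionVars false
set_option linter.unusedVariables false

section Ass16
variable {R : Type u} [CommRing R]

lemma aux_colon_zero {M : Type*} [AddCommGroup M] [Module R M] :
    (⊥ : Submodule R M).colon {0} = ⊤ := by
  ext r; simp [Submodule.mem_colon_singleton]

lemma aux_ass_quot_prime [IsNoetherianRing R] {p q : Ideal R} (hp : p.IsPrime)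
    (hq : IsAssociatedPrime q (R ⧸ p)) : q = p := by
  obtain ⟨hq1, x, hx⟩ := isAssociatedPrime_iff.mp hq
  obtain ⟨x, rfl⟩ := Ideal.Quotient.mk_surjective x
  have hx0 : (Ideal.Quotient.mk p) x ≠ 0 := by
    rintro h
    rw [h, aux_colon_zero] at hx
    exact hq1.ne_top hx
  have hxp : x ∉ p := by rwa [Ne, Ideal.Quotient.eq_zero_iff_mem] at hx0
  ext r
  rw [hx, Submodule.mem_colon_singleton, Submodule.mem_bot]
  have h2 : r • (Ideal.Quotient.mk p) x = (Ideal.Quotient.mk p) (r * x) := rfl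
  rw [h2, Ideal.Quotient.eq_zero_iff_mem]
  exact ⟨fun h => (hp.mem_or_mem h).resolve_right hxp, fun h => Ideal.mul_mem_right _ _ h⟩

lemma aux_ass_subset_union [IsNoetherianRing R] {M : Type*} [AddCommGroup M] [Module R M] (N : Submodule R M) :
    associatedPrimes R M ⊆ associatedPrimes R N ∪ associatedPrimes R (M ⧸ N) := by
  rintro p hp0
  obtain ⟨hp, x, hx⟩ := isAssociatedPrime_iff.mp hp0
  have key : ∀ r : R, r ∈ p ↔ r • x = 0 := fun r => by
    rw [hx, Submodule.mem_colon_singleton, Submodule.mem_bot]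
  by_cases h : ∃ r : R, r • x ∈ N ∧ r • x ≠ 0
  · obtain ⟨r, hrN, hr0⟩ := h
    left
    have hrp : r ∉ p := fun hr => hr0 ((key r).mp hr)
    refine isAssociatedPrime_iff.mpr ⟨hp, ⟨r • x, hrN⟩, ?_⟩
    ext s
    rw [Submodule.mem_colon_singleton, Submodule.mem_bot]
    have h3 : (s • (⟨r • x, hrN⟩ : N) = 0) ↔ s • (r • x) = 0 := by
      rw [← Subtype.coe_inj]; rfl
    rw [h3, smul_smul, ← key (s * r)]
    exact ⟨fun hs => Ideal.mul_mem_right _ _ hs,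
      fun hs => (hp.mem_or_mem hs).resolve_right hrp⟩
  · push_neg at h
    right
    refine isAssociatedPrime_iff.mpr ⟨hp, N.mkQ x, ?_⟩
    ext s
    rw [Submodule.mem_colon_singleton, Submodule.mem_bot, ← map_smul,
      Submodule.mkQ_apply, Submodule.Quotient.mk_eq_zero]
    exact ⟨fun hs => by rw [(key s).mp hs]; exact N.zero_mem,
      fun hs => (key s).mpr (by
        by_contra h0
        exact h0 (by by_contra h1; exact h1 (h s hs))) ⟩

lemma aux_ass_finite [IsNoetherianRing R] (M : Type*) [AddCommGroup M] [Module R M]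
    [Module.Finite R M] : (associatedPrimes R M).Finite := by
  have key : ∀ N : Submodule R M, (associatedPrimes R (M ⧸ N)).Finite := by
    intro N
    induction N using IsNoetherian.induction with
    | _ N ih =>
    by_cases h : Subsingleton (M ⧸ N)
    · rw [associatedPrimes.eq_empty_of_subsingleton]; exact Set.finite_empty
    · have : Nontrivial (M ⧸ N) := not_subsingleton_iff_nontrivial.mp h
      obtain ⟨p, hp0⟩ := associatedPrimes.nonempty R (M ⧸ N)
      obtain ⟨hp1, y, hy⟩ := isAssociatedPrime_iff.mp hp0
      obtain ⟨x, rfl⟩ := N.mkQ_surjective y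
      have hx0 : N.mkQ x ≠ 0 := by
        rintro h0
        rw [h0, aux_colon_zero] at hy
        exact hp1.ne_top hy
      have hxN : x ∉ N := by rwa [Ne, Submodule.mkQ_apply, Submodule.Quotient.mk_eq_zero] at hx0
      have hlt : N < N ⊔ R ∙ x := by
        refine lt_of_le_of_ne le_sup_left (fun hEq => hxN ?_)
        rw [hEq]; exact Submodule.mem_sup_right (Submodule.mem_span_singleton_self x)
      have hfin := ih _ hlt
      -- the span of mk x inside M ⧸ N
      have hsub := aux_ass_subset_union (R := R) (M := M ⧸ N) (R ∙ (N.mkQ x))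
      -- Ass of span ⊆ {p}
      have e1 : (R ⧸ p) ≃ₗ[R] ↥(R ∙ (N.mkQ x)) := by
        refine (Submodule.quotEquivOfEq _ _ ?_).symm ≪≫ₗ
          ((LinearMap.toSpanSingleton R (M ⧸ N) (N.mkQ x)).quotKerEquivRange ≪≫ₗ
            LinearEquiv.ofEq _ _ (LinearMap.span_singleton_eq_range R (M ⧸ N) (N.mkQ x)).symm)
        · ext r
          rw [LinearMap.mem_ker, hy, Submodule.mem_colon_singleton, Submodule.mem_bot]
          rfl
      have hspan : associatedPrimes R ↥(R ∙ (N.mkQ x)) ⊆ {p} := by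
        intro q hq
        have := (LinearEquiv.AssociatedPrimes.eq e1).symm ▸ hq
        exact aux_ass_quot_prime hp1 this
      -- (M⧸N)⧸span ≅ M ⧸ (N ⊔ span x)
      have hmap : Submodule.map N.mkQ (N ⊔ R ∙ x) = R ∙ (N.mkQ x) := by
        rw [Submodule.map_sup, Submodule.map_span, Set.image_singleton]
        have : Submodule.map N.mkQ N = ⊥ := by
          rw [eq_bot_iff]; rintro _ ⟨z, hz, rfl⟩
          simpa [Submodule.Quotient.mk_eq_zero] using hz
        rw [this, bot_sup_eq]
      have e2 : ((M ⧸ N) ⧸ (R ∙ (N.mkQ x))) ≃ₗ[R] M ⧸ (N ⊔ R ∙ x) :=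
        (Submodule.quotEquivOfEq _ _ hmap.symm) ≪≫ₗ
          Submodule.quotientQuotientEquivQuotient N (N ⊔ R ∙ x) le_sup_left
      refine Set.Finite.subset (Set.Finite.union (Set.finite_singleton p)
        ((LinearEquiv.AssociatedPrimes.eq e2) ▸ hfin)) ?_
      intro q hq
      rcases hsub hq with h1 | h1
      · exact Or.inl (hspan h1)
      · exact Or.inr ((LinearEquiv.AssociatedPrimes.eq e2) ▸ h1)
  have e0 : (M ⧸ (⊥ : Submodule R M)) ≃ₗ[R] M := Submodule.quotEquivOfEqBot ⊥ rfl
  rw [← LinearEquiv.AssociatedPrimes.eq e0]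
  exact key ⊥


end Ass16

section Two16
variable {R : Type u} [CommRing R] [IsLocalRing R] [IsNoetherianRing R]

lemma aux_dichotomy (M : Type u) [AddCommGroup M] [Module R M] [Module.Finite R M]
    [Nontrivial M] :
    (∃ x ∈ maximalIdeal R, IsSMulRegular M x) ∨
      ∃ c : M, c ≠ 0 ∧ ∀ r ∈ maximalIdeal R, r • c = 0 := by
  by_cases h : ∃ x ∈ maximalIdeal R, IsSMulRegular M x
  · exact Or.inl h
  right
  push_neg at h
  have hsub : (maximalIdeal R : Set R) ⊆ ⋃ p ∈ associatedPrimes R M, ↑p := by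
    intro r hr
    rw [biUnion_associatedPrimes_eq_zero_divisors R M]
    by_contra h'
    simp only [Set.mem_setOf_eq, not_exists, not_and] at h'
    refine h r hr (fun a b hab => ?_)
    have h0 : r • (a - b) = 0 := by
      have hab' : r • a = r • b := hab
      rw [smul_sub, hab', sub_self]
    by_contra hne
    exact h' (a - b) (sub_ne_zero.mpr hne) h0
  -- prime avoidance
  have hfin := aux_ass_finite (R := R) M
  have hcoe : ⋃ p ∈ associatedPrimes R M, (p : Set R) = ⋃ p ∈ (hfin.toFinset : Set (Ideal R)), ↑p := by
    simp [Set.Finite.coe_toFinset]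
  rw [hcoe] at hsub
  have hprime : ∀ p ∈ hfin.toFinset, p ≠ (⊥ : Ideal R) → p ≠ (⊥ : Ideal R) →
      p.IsPrime := by
    intro p hp _ _
    exact ((Set.Finite.mem_toFinset hfin).mp hp).isPrime
  obtain ⟨p, hps, hle⟩ := (Ideal.subset_union_prime (s := hfin.toFinset) (f := id)
    ⊥ ⊥ hprime).mp hsub
  have hpass : p ∈ associatedPrimes R M := (Set.Finite.mem_toFinset hfin).mp hps
  have hpm : p = maximalIdeal R :=
    le_antisymm (IsLocalRing.le_maximalIdeal hpass.isPrime.ne_top) hle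
  obtain ⟨hp1, c, hc⟩ := isAssociatedPrime_iff.mp hpass
  refine ⟨c, ?_, fun r hr => ?_⟩
  · rintro rfl
    rw [aux_colon_zero] at hc
    exact hp1.ne_top hc
  · have : r ∈ p := hpm ▸ hr
    rw [hc, Submodule.mem_colon_singleton, Submodule.mem_bot] at this
    exact this

lemma aux_reg_of_subsingleton (M : Type*) [AddCommGroup M] [Module R M]
    [Subsingleton M] (x : R) : IsSMulRegular M x :=
  fun a b _ => Subsingleton.elim a b

lemma aux_prod_reg₁ {M N : Type*} [AddCommGroup M] [Module R M] [AddCommGroup N]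
    [Module R N] {x : R} (h : IsSMulRegular (M × N) x) : IsSMulRegular M x := by
  intro a b hab
  have hab' : x • a = x • b := hab
  have : x • ((a, 0) : M × N) = x • ((b, 0) : M × N) := by
    simp [Prod.ext_iff, hab']
  exact congrArg Prod.fst (h this)

lemma aux_prod_reg₂ {M N : Type*} [AddCommGroup M] [Module R M] [AddCommGroup N]
    [Module R N] {x : R} (h : IsSMulRegular (M × N) x) : IsSMulRegular N x := by
  intro a b hab
  have hab' : x • a = x • b := hab
  have : x • ((0, a) : M × N) = x • ((0, b) : M × N) := by
    simp [Prod.ext_iff, hab']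
  exact congrArg Prod.snd (h this)

/-- Common regular element for three modules. -/
lemma aux_common_regular (M₁ M₂ M₃ : Type u)
    [AddCommGroup M₁] [Module R M₁] [Module.Finite R M₁]
    [AddCommGroup M₂] [Module R M₂] [Module.Finite R M₂]
    [AddCommGroup M₃] [Module R M₃] [Module.Finite R M₃]
    (h₁ : Subsingleton M₁ ∨ ∃ x ∈ maximalIdeal R, IsSMulRegular M₁ x)
    (h₂ : Subsingleton M₂ ∨ ∃ x ∈ maximalIdeal R, IsSMulRegular M₂ x)
    (h₃ : Subsingleton M₃ ∨ ∃ x ∈ maximalIdeal R, IsSMulRegular M₃ x) :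
    ∃ x ∈ maximalIdeal R,
      IsSMulRegular M₁ x ∧ IsSMulRegular M₂ x ∧ IsSMulRegular M₃ x := by
  by_cases hP : Subsingleton (M₁ × M₂ × M₃)
  · have i1 : Subsingleton M₁ := ⟨fun a b => congrArg Prod.fst (Subsingleton.elim (a,(0:M₂),(0:M₃)) (b,0,0))⟩
    have i2 : Subsingleton M₂ := ⟨fun a b => congrArg (Prod.fst ∘ Prod.snd) (Subsingleton.elim ((0:M₁),a,(0:M₃)) (0,b,0))⟩
    have i3 : Subsingleton M₃ := ⟨fun a b => congrArg (Prod.snd ∘ Prod.snd) (Subsingleton.elim ((0:M₁),(0:M₂),a) (0,0,b))⟩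
    exact ⟨0, Submodule.zero_mem _, aux_reg_of_subsingleton M₁ 0,
      aux_reg_of_subsingleton M₂ 0, aux_reg_of_subsingleton M₃ 0⟩
  · have : Nontrivial (M₁ × M₂ × M₃) := not_subsingleton_iff_nontrivial.mp hP
    rcases aux_dichotomy (R := R) (M₁ × M₂ × M₃) with ⟨x, hx, hreg⟩ | ⟨c, hc0, hc⟩
    · exact ⟨x, hx, aux_prod_reg₁ hreg, aux_prod_reg₁ (aux_prod_reg₂ hreg),
        aux_prod_reg₂ (aux_prod_reg₂ hreg)⟩
    · exfalso
      obtain ⟨c₁, c₂, c₃⟩ := c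
      have hcomp : ∀ r ∈ maximalIdeal R, r • c₁ = 0 ∧ r • c₂ = 0 ∧ r • c₃ = 0 := by
        intro r hr
        have := hc r hr
        rw [Prod.smul_def, Prod.smul_def] at this
        exact ⟨congrArg Prod.fst this, congrArg (Prod.fst ∘ Prod.snd) this,
          congrArg (Prod.snd ∘ Prod.snd) this⟩
      have : c₁ ≠ 0 ∨ c₂ ≠ 0 ∨ c₃ ≠ 0 := by
        by_contra hall
        push_neg at hall
        exact hc0 (by simp [hall.1, hall.2.1, hall.2.2, Prod.ext_iff])
      rcases this with h | h | h
      · rcases h₁ with hs | ⟨x, hx, hreg⟩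
        · exact h (Subsingleton.elim _ _)
        · exact h (hreg (show x • c₁ = x • 0 by rw [(hcomp x hx).1, smul_zero]))
      · rcases h₂ with hs | ⟨x, hx, hreg⟩
        · exact h (Subsingleton.elim _ _)
        · exact h (hreg (show x • c₂ = x • 0 by rw [(hcomp x hx).2.1, smul_zero]))
      · rcases h₃ with hs | ⟨x, hx, hreg⟩
        · exact h (Subsingleton.elim _ _)
        · exact h (hreg (show x • c₃ = x • 0 by rw [(hcomp x hx).2.2, smul_zero]))

-- rdepth API
lemma rdepth_of_subsingleton (M : Type u) [AddCommGroup M] [Module R M]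
    [h : Subsingleton M] : rdepth R M = ⊤ := if_pos h

lemma le_rdepth (M : Type u) [AddCommGroup M] [Module R M] {rs : List R}
    (h1 : ∀ r ∈ rs, r ∈ maximalIdeal R) (h2 : RingTheory.Sequence.IsRegular M rs) :
    (rs.length : ℕ∞) ≤ rdepth R M := by
  unfold rdepth
  split
  · exact le_top
  · exact le_sSup ⟨rs, h1, h2, rfl⟩

lemma aux_isRegular_take {M : Type*} [AddCommGroup M] [Module R M] {rs : List R}
    (h : RingTheory.Sequence.IsRegular M rs) (n : ℕ) :
    RingTheory.Sequence.IsRegular M (rs.take n) := by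
  constructor
  · have h1 := h.toIsWeaklyRegular
    rw [← List.take_append_drop n rs, isWeaklyRegular_append_iff] at h1
    exact h1.1
  · intro htop
    apply h.top_ne_smul
    have hle : Ideal.ofList (rs.take n) • (⊤ : Submodule R M) ≤ Ideal.ofList rs • ⊤ :=
      Submodule.smul_mono_left (Ideal.span_mono (fun r hr => List.take_subset n rs hr))
    exact le_antisymm (htop.le.trans hle) le_top

lemma exists_seq_of_le_rdepth (M : Type u) [AddCommGroup M] [Module R M] [Nontrivial M]
    (n : ℕ) (h : (n : ℕ∞) ≤ rdepth R M) :
    ∃ rs : List R, (∀ r ∈ rs, r ∈ maximalIdeal R) ∧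
      RingTheory.Sequence.IsRegular M rs ∧ rs.length = n := by
  rcases Nat.eq_zero_or_pos n with rfl | hn
  · exact ⟨[], by simp, RingTheory.Sequence.IsRegular.nil R M, rfl⟩
  rw [rdepth, if_neg (not_subsingleton_iff_nontrivial.mpr ‹_›)] at h
  have hlt : ((n - 1 : ℕ) : ℕ∞) < sSup {k : ℕ∞ | ∃ rs : List R,
      (∀ r ∈ rs, r ∈ maximalIdeal R) ∧ RingTheory.Sequence.IsRegular M rs ∧
        (rs.length : ℕ∞) = k} :=
    lt_of_lt_of_le (by exact_mod_cast Nat.sub_lt hn one_pos) h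
  obtain ⟨b, ⟨rs, hm, hreg, hlen⟩, hb⟩ := lt_sSup_iff.mp hlt
  rw [← hlen, Nat.cast_lt] at hb
  have hlen' : n ≤ rs.length := by omega
  refine ⟨rs.take n, fun r hr => hm r (List.take_subset n rs hr),
    aux_isRegular_take hreg n, by simp [hlen']⟩

lemma rdepth_congr {M N : Type u} [AddCommGroup M] [Module R M] [AddCommGroup N]
    [Module R N] (e : M ≃ₗ[R] N) : rdepth R M = rdepth R N := by
  unfold rdepth
  have hs : Subsingleton M ↔ Subsingleton N := e.toEquiv.subsingleton_congr
  by_cases h : Subsingleton M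
  · rw [if_pos h, if_pos (hs.mp h)]
  · rw [if_neg h, if_neg (fun hh => h (hs.mpr hh))]
    congr 1
    ext b
    constructor
    · rintro ⟨rs, h1, h2, h3⟩
      exact ⟨rs, h1, (e.isRegular_congr rs).mp h2, h3⟩
    · rintro ⟨rs, h1, h2, h3⟩
      exact ⟨rs, h1, (e.isRegular_congr rs).mpr h2, h3⟩

lemma aux_nontrivial_quotSMulTop {M : Type*} [AddCommGroup M] [Module R M]
    [Module.Finite R M] [Nontrivial M] {x : R} (hx : x ∈ maximalIdeal R) :
    Nontrivial (QuotSMulTop x M) := by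
  rw [← not_subsingleton_iff_nontrivial]
  intro hsub
  have htop : (x • ⊤ : Submodule R M) = ⊤ :=
    Submodule.Quotient.subsingleton_iff.mp hsub
  have hbot : (⊤ : Submodule R M) = ⊥ := by
    refine Submodule.eq_bot_of_le_smul_of_le_jacobson_bot (Ideal.span {x}) ⊤
      (Module.finite_def.mp ‹_›) ?_ ?_
    · rw [Submodule.ideal_span_singleton_smul, htop]
    · rw [IsLocalRing.jacobson_eq_maximalIdeal ⊥ bot_ne_top]
      exact (Ideal.span_le).mpr (by simpa using hx)
  have hz : ∀ a : M, a = 0 := fun a => by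
    have : a ∈ (⊥ : Submodule R M) := hbot ▸ Submodule.mem_top
    simpa using this
  obtain ⟨a, b, hab⟩ := exists_pair_ne M
  exact hab (by rw [hz a, hz b])


-- NEW MATERIAL

/-- If `rs` is a regular sequence of length `> n` on `M` and `x` is regular on
`M ⧸ (rs.take n)M`, then `rs.take n` is regular on `M ⧸ xM`, so the depth of
`M ⧸ xM` is at least `n`. -/
lemma aux_rdepth_quotSMulTop {M : Type u} [AddCommGroup M] [Module R M]
    [Module.Finite R M] {rs : List R} {x : R}
    (hrs : ∀ r ∈ rs, r ∈ maximalIdeal R)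
    (hreg : RingTheory.Sequence.IsRegular M rs) (n : ℕ) (hlen : n ≤ rs.length)
    (hx : x ∈ maximalIdeal R)
    (hxq : IsSMulRegular (M ⧸ (Ideal.ofList (rs.take n) • ⊤ : Submodule R M)) x) :
    IsSMulRegular M x ∧ (n : ℕ∞) ≤ rdepth R (QuotSMulTop x M) := by
  have hnontriv : Nontrivial M := hreg.nontrivial
  haveI : IsNoetherian R M := isNoetherian_of_isNoetherianRing_of_finite R M
  have htake := aux_isRegular_take hreg n
  have happ : IsWeaklyRegular M (rs.take n ++ [x]) :=
    (isWeaklyRegular_append_iff M _ _).mpr ⟨htake.toIsWeaklyRegular,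
      (isWeaklyRegular_singleton_iff _ x).mpr hxq⟩
  have hmem : ∀ r ∈ rs.take n ++ [x], r ∈ maximalIdeal R := by
    intro r hr
    rcases List.mem_append.mp hr with h | h
    · exact hrs r (List.take_subset n rs h)
    · rw [List.mem_singleton.mp h]; exact hx
  have hreg' : RingTheory.Sequence.IsRegular M (rs.take n ++ [x]) :=
    (IsLocalRing.isRegular_iff_isWeaklyRegular_of_subset_maximalIdeal hmem).mpr happ
  have hperm : RingTheory.Sequence.IsRegular M (x :: rs.take n) :=
    IsLocalRing.isRegular_of_perm hreg' List.perm_append_comm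
  obtain ⟨hx1, hx2⟩ := (isRegular_cons_iff M x _).mp hperm
  refine ⟨hx1, ?_⟩
  have hlentake : ((rs.take n).length : ℕ∞) = (n : ℕ∞) := by
    simp [List.length_take, hlen]
  exact hlentake ▸ le_rdepth _ (fun r hr => hrs r (List.take_subset n rs hr)) hx2

lemma aux_map_injective {A B C : Type u}
    [AddCommGroup A] [Module R A] [AddCommGroup B] [Module R B]
    [AddCommGroup C] [Module R C]
    (ι : A →ₗ[R] B) (π : B →ₗ[R] C) (hι : Function.Injective ι)
    (hker : LinearMap.ker π = LinearMap.range ι) {x : R}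
    (hxB : IsSMulRegular B x) (hxC : IsSMulRegular C x) :
    Function.Injective (QuotSMulTop.map x ι) := by
  rw [← LinearMap.ker_eq_bot, eq_bot_iff]
  intro q hq
  obtain ⟨a, rfl⟩ := Submodule.Quotient.mk_surjective _ q
  rw [LinearMap.mem_ker, QuotSMulTop.map_apply_mk, Submodule.Quotient.mk_eq_zero] at hq
  obtain ⟨b, -, hb⟩ : ∃ y ∈ ((⊤ : Submodule R B) : Set B), x • y = ι a := by
    have := hq
    rw [← SetLike.mem_coe, Submodule.coe_pointwise_smul] at this
    exact Set.mem_smul_set.mp this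
  have hπb : π b = 0 := by
    have h1 : π (ι a) ∈ (⊥ : Submodule R C) := by
      have : ι a ∈ LinearMap.ker π := hker ▸ LinearMap.mem_range_self ι a
      simpa using this
    have h2 : x • π b = 0 := by
      rw [← map_smul, hb]; simpa using h1
    exact hxC (show x • π b = x • 0 by rw [h2, smul_zero])
  obtain ⟨a₀, ha₀⟩ : b ∈ LinearMap.range ι := hker ▸ LinearMap.mem_ker.mpr hπb
  have : ι a = ι (x • a₀) := by rw [map_smul, ha₀, hb]
  have ha : a = x • a₀ := hι this
  rw [Submodule.mem_bot, Submodule.Quotient.mk_eq_zero, ha]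
  exact Submodule.smul_mem_pointwise_smul a₀ x ⊤ Submodule.mem_top

/-- Depth ≥ 1 for the cokernel: if `0 → A → B → C → 0` is exact with
`depth A ≥ 2` and `depth B ≥ 1`, then some element of the maximal ideal is
regular on `C`. -/
lemma aux_depth_one {A B C : Type u}
    [AddCommGroup A] [Module R A] [Module.Finite R A]
    [AddCommGroup B] [Module R B] [Module.Finite R B]
    [AddCommGroup C] [Module R C] [Module.Finite R C] [Nontrivial C]
    (ι : A →ₗ[R] B) (π : B →ₗ[R] C) (hι : Function.Injective ι)
    (hker : LinearMap.ker π = LinearMap.range ι) (hπ : Function.Surjective π)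
    (hA : (2 : ℕ∞) ≤ rdepth R A) (hB : (1 : ℕ∞) ≤ rdepth R B) :
    ∃ r ∈ maximalIdeal R, IsSMulRegular C r := by
  by_cases hAs : Subsingleton A
  · -- B ≃ C
    have hkerbot : LinearMap.ker π = ⊥ := by
      rw [hker, eq_bot_iff]
      rintro _ ⟨a, rfl⟩
      rw [Subsingleton.elim a 0, map_zero]; exact Submodule.zero_mem ⊥
    have e : B ≃ₗ[R] C := LinearEquiv.ofBijective π ⟨LinearMap.ker_eq_bot.mp hkerbot, hπ⟩
    haveI : Nontrivial B := e.toEquiv.nontrivial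
    obtain ⟨rs, hm, hreg, hlen⟩ := exists_seq_of_le_rdepth B 1 (by exact_mod_cast hB)
    obtain ⟨r, rfl⟩ : ∃ r, rs = [r] := by
      cases rs with
      | nil => simp at hlen
      | cons r t => cases t with
        | nil => exact ⟨r, rfl⟩
        | cons s u => simp at hlen
    refine ⟨r, hm r (List.mem_singleton_self r), ?_⟩
    have := ((isRegular_cons_iff B r []).mp hreg).1
    exact (e.isSMulRegular_congr r).mp this
  by_cases hBs : Subsingleton B
  · exact absurd (hπ.subsingleton) (not_subsingleton_iff_nontrivial.mpr ‹_›)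
  haveI : Nontrivial A := not_subsingleton_iff_nontrivial.mp hAs
  haveI : Nontrivial B := not_subsingleton_iff_nontrivial.mp hBs
  obtain ⟨as, ham, hareg, halen⟩ := exists_seq_of_le_rdepth A 2 (by exact_mod_cast hA)
  obtain ⟨bs, hbm, hbreg, hblen⟩ := exists_seq_of_le_rdepth B 1 (by exact_mod_cast hB)
  by_contra hno
  push_neg at hno
  -- C has a socle element
  have hCdich : ∃ c : C, c ≠ 0 ∧ ∀ r ∈ maximalIdeal R, r • c = 0 := by
    rcases aux_dichotomy (R := R) C with ⟨x, hx, hreg⟩ | h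
    · exact absurd hreg (hno x hx)
    · exact h
  obtain ⟨c, hc0, hc⟩ := hCdich
  -- find x regular on A, B, and A ⧸ (as.take 1)A
  have h1 : Subsingleton A ∨ ∃ x ∈ maximalIdeal R, IsSMulRegular A x := by
    right
    refine ⟨as[0]'(by omega), ham _ (List.getElem_mem _), ?_⟩
    have := hareg.toIsWeaklyRegular.regular_mod_prev 0 (by omega)
    have e0 : (A ⧸ (Ideal.ofList (as.take 0) • ⊤ : Submodule R A)) ≃ₗ[R] A := by
      refine Submodule.quotEquivOfEqBot _ ?_
      simp
    exact (e0.isSMulRegular_congr _).mp this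
  have h2 : Subsingleton B ∨ ∃ x ∈ maximalIdeal R, IsSMulRegular B x := by
    right
    refine ⟨bs[0]'(by omega), hbm _ (List.getElem_mem _), ?_⟩
    have := hbreg.toIsWeaklyRegular.regular_mod_prev 0 (by omega)
    have e0 : (B ⧸ (Ideal.ofList (bs.take 0) • ⊤ : Submodule R B)) ≃ₗ[R] B := by
      refine Submodule.quotEquivOfEqBot _ ?_
      simp
    exact (e0.isSMulRegular_congr _).mp this
  have h3 : Subsingleton (A ⧸ (Ideal.ofList (as.take 1) • ⊤ : Submodule R A)) ∨
      ∃ x ∈ maximalIdeal R,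
        IsSMulRegular (A ⧸ (Ideal.ofList (as.take 1) • ⊤ : Submodule R A)) x := by
    right
    exact ⟨as[1]'(by omega), ham _ (List.getElem_mem _),
      hareg.toIsWeaklyRegular.regular_mod_prev 1 (by omega)⟩
  obtain ⟨x, hxm, hxA', hxB, hxQ⟩ := aux_common_regular A B
    (A ⧸ (Ideal.ofList (as.take 1) • ⊤ : Submodule R A)) h1 h2 h3
  -- y regular on QuotSMulTop x A
  obtain ⟨hxA, hyd⟩ := aux_rdepth_quotSMulTop ham hareg 1 (by omega) hxm hxQ
  haveI : Nontrivial (QuotSMulTop x A) := aux_nontrivial_quotSMulTop hxm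
  obtain ⟨ys, hym, hyreg, hylen⟩ := exists_seq_of_le_rdepth (QuotSMulTop x A) 1
    (by exact_mod_cast hyd)
  obtain ⟨y, rfl⟩ : ∃ y, ys = [y] := by
    cases ys with
    | nil => simp at hylen
    | cons r t => cases t with
      | nil => exact ⟨r, rfl⟩
      | cons s u => simp at hylen
  have hyQ : IsSMulRegular (QuotSMulTop x A) y := ((isRegular_cons_iff _ y []).mp hyreg).1
  have hy : y ∈ maximalIdeal R := hym y (List.mem_singleton_self y)
  -- the contradiction computation
  obtain ⟨b, hb⟩ := hπ c
  have hxc : π (x • b) = 0 := by rw [map_smul, hb, hc x hxm]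
  obtain ⟨a, ha⟩ : x • b ∈ LinearMap.range ι := hker ▸ LinearMap.mem_ker.mpr hxc
  have hyc : π (y • b) = 0 := by rw [map_smul, hb, hc y hy]
  obtain ⟨a', ha'⟩ : y • b ∈ LinearMap.range ι := hker ▸ LinearMap.mem_ker.mpr hyc
  have key : ι (y • a) = ι (x • a') := by
    rw [map_smul, map_smul, ha, ha', smul_comm]
  have hya : y • a = x • a' := hι key
  -- in QuotSMulTop x A : y • mk a = 0
  have hmk : y • (Submodule.Quotient.mk a : QuotSMulTop x A) = 0 := by
    rw [← Submodule.Quotient.mk_smul, hya, Submodule.Quotient.mk_eq_zero]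
    exact Submodule.smul_mem_pointwise_smul a' x ⊤ Submodule.mem_top
  have hmka : (Submodule.Quotient.mk a : QuotSMulTop x A) = 0 :=
    hyQ (show y • (Submodule.Quotient.mk a : QuotSMulTop x A) = y • 0 by
      rw [hmk, smul_zero])
  have haxx : a ∈ (x • ⊤ : Submodule R A) := (Submodule.Quotient.mk_eq_zero _).mp hmka
  obtain ⟨a₂, -, ha₂⟩ : ∃ z ∈ ((⊤ : Submodule R A) : Set A), x • z = a := by
    rw [← SetLike.mem_coe, Submodule.coe_pointwise_smul] at haxx
    exact Set.mem_smul_set.mp haxx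
  have : x • (ι a₂) = x • b := by
    rw [← map_smul, ha₂, ha]
  have hbι : b = ι a₂ := (hxB this).symm
  have : c = 0 := by
    rw [← hb, hbι]
    have : ι a₂ ∈ LinearMap.ker π := hker ▸ LinearMap.mem_range_self ι a₂
    simpa using this
  exact hc0 this


/-- The depth lemma: for `0 → A → B → C → 0` exact,
`depth C ≥ min (depth A - 1) (depth B)`. -/
lemma aux_depth_lemma (n : ℕ) {A B C : Type u}
    [AddCommGroup A] [Module R A] [Module.Finite R A]
    [AddCommGroup B] [Module R B] [Module.Finite R B]
    [AddCommGroup C] [Module R C] [Module.Finite R C]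
    (ι : A →ₗ[R] B) (π : B →ₗ[R] C) (hι : Function.Injective ι)
    (hker : LinearMap.ker π = LinearMap.range ι) (hπ : Function.Surjective π)
    (hA : ((n + 1 : ℕ) : ℕ∞) ≤ rdepth R A) (hB : ((n : ℕ) : ℕ∞) ≤ rdepth R B) :
    ((n : ℕ) : ℕ∞) ≤ rdepth R C := by
  induction n generalizing A B C with
  | zero => simp only [Nat.cast_zero]; exact zero_le
  | succ n ih =>
    by_cases hCs : Subsingleton C
    · rw [rdepth_of_subsingleton]; exact le_top
    haveI : Nontrivial C := not_subsingleton_iff_nontrivial.mp hCs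
    by_cases hAs : Subsingleton A
    · have hkerbot : LinearMap.ker π = ⊥ := by
        rw [hker, eq_bot_iff]
        rintro _ ⟨a, rfl⟩
        rw [Subsingleton.elim a 0, map_zero]; exact Submodule.zero_mem ⊥
      have e : B ≃ₗ[R] C := LinearEquiv.ofBijective π ⟨LinearMap.ker_eq_bot.mp hkerbot, hπ⟩
      rw [← rdepth_congr e]
      exact hB
    by_cases hBs : Subsingleton B
    · exact absurd hπ.subsingleton hCs
    haveI : Nontrivial A := not_subsingleton_iff_nontrivial.mp hAs
    haveI : Nontrivial B := not_subsingleton_iff_nontrivial.mp hBs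
    obtain ⟨as, ham, hareg, halen⟩ := exists_seq_of_le_rdepth A (n + 2)
      (by exact_mod_cast hA)
    obtain ⟨bs, hbm, hbreg, hblen⟩ := exists_seq_of_le_rdepth B (n + 1)
      (by exact_mod_cast hB)
    have hC1 : ∃ r ∈ maximalIdeal R, IsSMulRegular C r := by
      refine aux_depth_one ι π hι hker hπ (le_trans ?_ hA) (le_trans ?_ hB)
      · exact_mod_cast (by omega : (2 : ℕ) ≤ n + 1 + 1)
      · exact_mod_cast (by omega : (1 : ℕ) ≤ n + 1)
    have h1 : Subsingleton (A ⧸ (Ideal.ofList (as.take (n + 1)) • ⊤ : Submodule R A)) ∨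
        ∃ x ∈ maximalIdeal R,
          IsSMulRegular (A ⧸ (Ideal.ofList (as.take (n + 1)) • ⊤ : Submodule R A)) x :=
      Or.inr ⟨as[n + 1]'(by omega), ham _ (List.getElem_mem _),
        hareg.toIsWeaklyRegular.regular_mod_prev (n + 1) (by omega)⟩
    have h2 : Subsingleton (B ⧸ (Ideal.ofList (bs.take n) • ⊤ : Submodule R B)) ∨
        ∃ x ∈ maximalIdeal R,
          IsSMulRegular (B ⧸ (Ideal.ofList (bs.take n) • ⊤ : Submodule R B)) x :=
      Or.inr ⟨bs[n]'(by omega), hbm _ (List.getElem_mem _),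
        hbreg.toIsWeaklyRegular.regular_mod_prev n (by omega)⟩
    obtain ⟨x, hxm, hxQA, hxQB, hxC⟩ := aux_common_regular
      (A ⧸ (Ideal.ofList (as.take (n + 1)) • ⊤ : Submodule R A))
      (B ⧸ (Ideal.ofList (bs.take n) • ⊤ : Submodule R B)) C h1 h2 (Or.inr hC1)
    obtain ⟨hxA, hdA⟩ := aux_rdepth_quotSMulTop ham hareg (n + 1) (by omega) hxm hxQA
    obtain ⟨hxB, hdB⟩ := aux_rdepth_quotSMulTop hbm hbreg n (by omega) hxm hxQB
    have hι' := aux_map_injective ι π hι hker hxB hxC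
    have hexact := QuotSMulTop.map_exact x (LinearMap.exact_iff.mpr hker) hπ
    have hker' := LinearMap.exact_iff.mp hexact
    have hπ' := QuotSMulTop.map_surjective x hπ
    have hrec : ((n : ℕ) : ℕ∞) ≤ rdepth R (QuotSMulTop x C) :=
      ih (QuotSMulTop.map x ι) (QuotSMulTop.map x π) hι' hker' hπ' hdA hdB
    haveI : Nontrivial (QuotSMulTop x C) := aux_nontrivial_quotSMulTop hxm
    obtain ⟨cs, hcm, hcreg, hclen⟩ := exists_seq_of_le_rdepth (QuotSMulTop x C) n hrec
    have hfull : RingTheory.Sequence.IsRegular C (x :: cs) :=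
      RingTheory.Sequence.IsRegular.cons hxC hcreg
    have hmem : ∀ r ∈ x :: cs, r ∈ maximalIdeal R := by
      intro r hr
      rcases List.mem_cons.mp hr with h | h
      · rw [h]; exact hxm
      · exact hcm r h
    have := le_rdepth C hmem hfull
    rw [List.length_cons, hclen] at this
    exact_mod_cast this


end Two16

end StmtAux

/-- truncation of a complex exact in low degrees, and the depth of the cokernel. -/
theorem stmt16 (R : Type u) [CommRing R] [IsLocalRing R] [IsNoetherianRing R]
    (d : ℕ) (hd : ringKrullDim R = d)
    (X : ℕ → Type u) [∀ i, AddCommGroup (X i)] [∀ i, Module R (X i)]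
    [∀ i, Module.Finite R (X i)]
    (f : ∀ i, X i →ₗ[R] X (i + 1)) (hc : ∀ i, (f (i + 1)) ∘ₗ (f i) = 0)
    (m : ℕ)
    (h0 : LinearMap.ker (f 0) = ⊥)
    (hex : ∀ i, i < m → LinearMap.range (f i) = LinearMap.ker (f (i + 1))) :
    (Function.Injective (f 0) ∧
      (∀ i, i < m → Function.Exact (f i) (f (i + 1))) ∧
      Function.Exact (f m) (LinearMap.range (f m)).mkQ ∧
      Function.Surjective (LinearMap.range (f m)).mkQ) ∧
    ((∀ i, i ≤ m + 1 → ((d - i : ℕ) : ℕ∞) ≤ rdepth R (X i)) → m + 1 < d →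
      ((d - (m + 1) : ℕ) : ℕ∞) ≤ rdepth R (X (m + 1) ⧸ LinearMap.range (f m)) ∧
      0 < rdepth R (X (m + 1) ⧸ LinearMap.range (f m))) := by
  constructor
  · refine ⟨LinearMap.ker_eq_bot.mp h0, fun i hi => ?_, ?_, ?_⟩
    · exact LinearMap.exact_iff.mpr (hex i hi).symm
    · exact LinearMap.exact_iff.mpr (Submodule.ker_mkQ _)
    · exact Submodule.mkQ_surjective _
  intro h hmd
  haveI : ∀ i, Module.Finite R ↥(LinearMap.range (f i)) := by
    intro i
    haveI : IsNoetherian R (X (i + 1)) := isNoetherian_of_isNoetherianRing_of_finite R _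
    exact Module.Finite.iff_fg.mpr (IsNoetherian.noetherian _)
  have key : ∀ i, i ≤ m → ((d - i : ℕ) : ℕ∞) ≤ rdepth R ↥(LinearMap.range (f i)) := by
    intro i
    induction i with
    | zero =>
      intro _
      have e : X 0 ≃ₗ[R] ↥(LinearMap.range (f 0)) :=
        LinearEquiv.ofInjective (f 0) (LinearMap.ker_eq_bot.mp h0)
      rw [← rdepth_congr e]
      exact h 0 (by omega)
    | succ i ih =>
      intro hi
      have hstep := aux_depth_lemma (R := R) (d - (i + 1))
        (LinearMap.range (f i)).subtype (f (i + 1)).rangeRestrict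
        (Submodule.injective_subtype _) ?_ (LinearMap.surjective_rangeRestrict _)
        ?_ ?_
      · exact hstep
      · rw [LinearMap.ker_rangeRestrict, ← hex i (by omega), Submodule.range_subtype]
      · have harith : d - (i + 1) + 1 = d - i := by omega
        rw [harith]
        exact ih (by omega)
      · exact h (i + 1) (by omega)
  have hfinal := aux_depth_lemma (R := R) (d - (m + 1))
    (LinearMap.range (f m)).subtype (LinearMap.range (f m)).mkQ
    (Submodule.injective_subtype _) ?_ (Submodule.mkQ_surjective _) ?_ ?_
  · refine ⟨hfinal, ?_⟩
    refine lt_of_lt_of_le ?_ hfinal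
    exact_mod_cast Nat.sub_pos_of_lt hmd
  · rw [Submodule.ker_mkQ, Submodule.range_subtype]
  · have harith : d - (m + 1) + 1 = d - m := by omega
    rw [harith]
    exact key m (by omega)
  · exact h (m + 1) (by omega)
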